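/- Let d ≥ 1, s ∈ (0,1), p ∈ (1,∞), R₀ ∈ (0,1), and let u : ℝ^d → ℝ be β-Hölder continuous on the closed ball of radius R₀ about 0, for some β ∈ (0,1]. If for every i ∈ {1,…,d} the series Σ_{k=1}^∞ m_{i,k}^{−1/(2k)} diverges to +∞, then u vanishes to infinite order at the origin, i.e. for every n ∈ ℕ there exists C > 0 such that |u(x)| ≤ C|x|^n for all x in a neighborhood of 0. -/

import Mathlib

open MeasureTheory Filter Asymptotics Metric Set NNReal ENNReal

noncomputable section

/-- Euclidean space `ℝ^d`. -/
abbrev Ed (d : ℕ) := EuclideanSpace ℝ (Fin d)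

/-- `J_p(t) = |t|^{p-2} t`. -/
def Jp (p t : ℝ) : ℝ := |t| ^ (p - 2) * t

/-- The principal value defining the fractional `p`-Laplacian of `u` at `x` exists and
equals `L`. -/
def fracPLapAt (d : ℕ) (s p : ℝ) (u : Ed d → ℝ) (x : Ed d) (L : ℝ) : Prop :=
  Tendsto (fun δ : ℝ =>
      ∫ y in {y : Ed d | δ < ‖x - y‖}, Jp p (u x - u y) / ‖x - y‖ ^ ((d : ℝ) + s * p))
    (nhdsWithin 0 (Ioi 0)) (nhds L)

/-- Membership in the tail space `L^{p-1}_{sp}(ℝ^d)`. -/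
def memTail (d : ℕ) (s p : ℝ) (u : Ed d → ℝ) : Prop :=
  Measurable u ∧
    Integrable (fun x : Ed d => |u x| ^ (p - 1) / (1 + ‖x‖) ^ ((d : ℝ) + s * p))

/-- The moments `m_{i,k} = ∫ x_i^{2k} |x|^{-4k} |u(x)|^{p-1} |x|^{-d-sp} dx ∈ [0,∞]`. -/
def mik (d : ℕ) (s p : ℝ) (u : Ed d → ℝ) (i : Fin d) (k : ℕ) : ℝ≥0∞ :=
  ∫⁻ x : Ed d, ENNReal.ofReal
    ((x i ^ (2 * k) / ‖x‖ ^ (4 * k)) * (|u x| ^ (p - 1) / ‖x‖ ^ ((d : ℝ) + s * p)))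

/-- The Carleman-type condition: for every `i` the series `∑_{k≥1} m_{i,k}^{-1/(2k)}`
diverges to `+∞` (with conventions `1/0 = ∞`, `1/∞ = 0`). -/
def carleman (d : ℕ) (s p : ℝ) (u : Ed d → ℝ) : Prop :=
  ∀ i : Fin d, ∑' k : ℕ, (mik d s p u i (k + 1) ^ ((1 : ℝ) / (2 * ((k : ℝ) + 1))))⁻¹ = ⊤


/-! ### Auxiliary lemmas -/

lemma aux_norm_sq {d : ℕ} (x : Ed d) : ‖x‖ ^ 2 = ∑ j, x j ^ 2 := by
  rw [EuclideanSpace.norm_eq, Real.sq_sqrt (by positivity)]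
  exact Finset.sum_congr rfl fun j _ => by rw [Real.norm_eq_abs, sq_abs]

lemma aux_coord_le_norm {d : ℕ} (x : Ed d) (i : Fin d) : |x i| ≤ ‖x‖ := by
  have h1 : x i ^ 2 ≤ ∑ j, x j ^ 2 :=
    Finset.single_le_sum (f := fun j => x j ^ 2) (fun j _ => sq_nonneg _) (Finset.mem_univ i)
  rw [← aux_norm_sq] at h1
  calc |x i| = Real.sqrt (x i ^ 2) := (Real.sqrt_sq_eq_abs _).symm
  _ ≤ Real.sqrt (‖x‖ ^ 2) := Real.sqrt_le_sqrt h1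
  _ = ‖x‖ := by rw [Real.sqrt_sq (norm_nonneg x)]

lemma aux_exists_big_coord {d : ℕ} (hd : 1 ≤ d) (x : Ed d) :
    ∃ i, ‖x‖ ≤ Real.sqrt d * |x i| := by
  have hne : (Finset.univ : Finset (Fin d)).Nonempty := by
    simpa [Finset.univ_nonempty_iff] using Fin.pos_iff_nonempty.mp hd
  have hd0 : (0:ℝ) < d := by exact_mod_cast hd
  by_contra h
  push_neg at h
  have hlt : ∀ i : Fin d, x i ^ 2 < ‖x‖ ^ 2 / d := by
    intro i
    have h2 := mul_self_lt_mul_self (by positivity) (h i)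
    have h3 : Real.sqrt d * Real.sqrt d = d := Real.mul_self_sqrt hd0.le
    have h4 : (d:ℝ) * (x i) ^ 2 < ‖x‖ ^ 2 := by nlinarith [sq_abs (x i)]
    rw [lt_div_iff₀ hd0]
    linarith
  have hsum : ∑ j, x j ^ 2 < ∑ _j : Fin d, (‖x‖ ^ 2 / d) :=
    Finset.sum_lt_sum_of_nonempty hne (fun i _ => hlt i)
  rw [← aux_norm_sq, Finset.sum_const, Finset.card_univ, Fintype.card_fin, nsmul_eq_mul] at hsum
  rw [mul_div_cancel₀ _ hd0.ne'] at hsum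
  exact lt_irrefl _ hsum

lemma aux_mik_lower {d : ℕ} {s p : ℝ} {u : Ed d → ℝ} {i : Fin d} {k : ℕ}
    {c : ℝ} {B : Set (Ed d)} (hB : MeasurableSet B)
    (hc : ∀ y ∈ B, c ≤ (y i ^ (2 * k) / ‖y‖ ^ (4 * k)) *
      (|u y| ^ (p - 1) / ‖y‖ ^ ((d : ℝ) + s * p))) :
    ENNReal.ofReal c * volume B ≤ mik d s p u i k := by
  have h1 : ∀ y, B.indicator (fun _ => ENNReal.ofReal c) y ≤
      ENNReal.ofReal ((y i ^ (2 * k) / ‖y‖ ^ (4 * k)) *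
        (|u y| ^ (p - 1) / ‖y‖ ^ ((d : ℝ) + s * p))) := by
    intro y
    by_cases hy : y ∈ B
    · rw [Set.indicator_of_mem hy]
      exact ENNReal.ofReal_le_ofReal (hc y hy)
    · rw [Set.indicator_of_notMem hy]; exact zero_le
  calc ENNReal.ofReal c * volume B
      = ∫⁻ y, B.indicator (fun _ => ENNReal.ofReal c) y := by
        rw [lintegral_indicator hB, setLIntegral_const]
    _ ≤ mik d s p u i k := lintegral_mono h1

lemma aux_holder_dist {d : ℕ} {C : ℝ≥0} {r : ℝ≥0} {u : Ed d → ℝ} {S : Set (Ed d)}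
    (h : HolderOnWith C r u S) {x y : Ed d} (hx : x ∈ S) (hy : y ∈ S) :
    |u x - u y| ≤ (C : ℝ) * ‖x - y‖ ^ (r : ℝ) := by
  have h0 := h.edist_le hx hy
  rw [edist_dist, edist_dist] at h0
  have h2 : ENNReal.ofReal (dist (u x) (u y)) ≤
      ENNReal.ofReal ((C : ℝ) * dist x y ^ (r : ℝ)) := by
    refine h0.trans_eq ?_
    rw [ENNReal.ofReal_mul C.coe_nonneg, ENNReal.ofReal_rpow_of_nonneg dist_nonneg r.coe_nonneg,
      ENNReal.ofReal_coe_nnreal]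
  have hd := (ENNReal.ofReal_le_ofReal_iff (by positivity)).mp h2
  rw [Real.dist_eq, dist_eq_norm] at hd
  exact hd

set_option maxHeartbeats 2000000 in
/-- If `u` is `β`-Hölder continuous on the closed ball `B_{R₀}(0)` and the
Carleman condition holds, then `u` vanishes to infinite order at the origin: for every
`n ∈ ℕ` there is `C > 0` with `|u(x)| ≤ C |x|^n` in a neighborhood of `0`. -/
theorem carleman_implies_infinite_order_vanishing
    (d : ℕ) (hd : 1 ≤ d) (s p : ℝ) (hs : s ∈ Ioo (0 : ℝ) 1) (hp : 1 < p)
    (R₀ : ℝ) (hR₀ : R₀ ∈ Ioo (0 : ℝ) 1)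
    (u : Ed d → ℝ) (β : ℝ) (hβ_pos : 0 < β) (hβ_le : β ≤ 1)
    (hreg : ∃ C : ℝ≥0, HolderOnWith C β.toNNReal u (closedBall (0 : Ed d) R₀))
    (hcar : carleman d s p u) :
    ∀ n : ℕ, ∃ C > (0 : ℝ), ∃ δ > (0 : ℝ), ∀ x : Ed d, ‖x‖ < δ → |u x| ≤ C * ‖x‖ ^ n := by
  by_contra hcon
  push_neg at hcon
  obtain ⟨n₀, hfail₀⟩ := hcon
  -- reduce to exponent `m ≥ 1`
  set m : ℕ := max n₀ 1 with hm_def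
  have hm1 : 1 ≤ m := le_max_right _ _
  have hfail : ∀ C > (0:ℝ), ∀ δ > (0:ℝ), ∃ x : Ed d, ‖x‖ < δ ∧ C * ‖x‖ ^ m < |u x| := by
    intro C hC δ hδ
    obtain ⟨x, hx1, hx2⟩ := hfail₀ C hC (min δ 1) (lt_min hδ one_pos)
    refine ⟨x, hx1.trans_le (min_le_left _ _), lt_of_le_of_lt ?_ hx2⟩
    have hx3 : ‖x‖ ≤ 1 := (hx1.trans_le (min_le_right _ _)).le
    have := pow_le_pow_of_le_one (norm_nonneg x) hx3 (le_max_left n₀ 1)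
    exact mul_le_mul_of_nonneg_left this hC.le
  obtain ⟨C₀, hC₀⟩ := hreg
  set CH : ℝ := max (C₀:ℝ) 1 with hCH_def
  have hCH1 : (1:ℝ) ≤ CH := le_max_right _ _
  have hCH0 : (0:ℝ) < CH := lt_of_lt_of_le one_pos hCH1
  have hβcoe : ((β.toNNReal : ℝ)) = β := Real.coe_toNNReal β hβ_pos.le
  have hu : ∀ x ∈ closedBall (0:Ed d) R₀, ∀ y ∈ closedBall (0:Ed d) R₀,
      |u x - u y| ≤ CH * ‖x - y‖ ^ β := by
    intro x hx y hy
    have h1 := aux_holder_dist hC₀ hx hy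
    rw [hβcoe] at h1
    exact h1.trans (mul_le_mul_of_nonneg_right (le_max_left _ _)
      (Real.rpow_nonneg (norm_nonneg _) β))
  -- a sequence of points witnessing failure of order-m vanishing
  have hseq : ∀ j : ℕ, ∃ x : Ed d, x ≠ 0 ∧ ‖x‖ < min (1/((j:ℝ)+1)) (R₀/2) ∧
      ((j:ℝ)+1) * ‖x‖ ^ m ≤ |u x| := by
    intro j
    have hδpos : 0 < min (1/((j:ℝ)+1)) (R₀/2) := lt_min (by positivity) (by linarith [hR₀.1])
    by_cases hu0 : u 0 = 0
    · obtain ⟨y, hy1, hy2⟩ := hfail ((j:ℝ)+1) (by positivity) _ hδpos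
      refine ⟨y, ?_, hy1, hy2.le⟩
      rintro rfl
      rw [norm_zero, zero_pow (by omega : m ≠ 0), mul_zero, hu0, abs_zero] at hy2
      exact lt_irrefl _ hy2
    · set a := |u 0| with ha_def
      have ha0 : 0 < a := abs_pos.mpr hu0
      set η : ℝ := min ((a/(2*CH)) ^ (1/β : ℝ)) (R₀/2) with hη_def
      have hηpos : 0 < η := lt_min (Real.rpow_pos_of_pos (by positivity) _)
        (by linarith [hR₀.1])
      set t : ℝ := min (min η ((a/(2*((j:ℝ)+1))) ^ (1/(m:ℝ))))
        (min (1/((j:ℝ)+2)) (R₀/4)) with ht_def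
      have htpos : 0 < t :=
        lt_min (lt_min hηpos (Real.rpow_pos_of_pos (by positivity) _))
          (lt_min (by positivity) (by linarith [hR₀.1]))
      set z : Ed d := EuclideanSpace.single (⟨0, hd⟩ : Fin d) t with hz_def
      have hznorm : ‖z‖ = t := by
        rw [hz_def, EuclideanSpace.norm_single, Real.norm_eq_abs, abs_of_pos htpos]
      have htR : t ≤ R₀/4 := le_trans (min_le_right _ _) (min_le_right _ _)
      have htj : t ≤ 1/((j:ℝ)+2) := le_trans (min_le_right _ _) (min_le_left _ _)
      have htη : t ≤ η := le_trans (min_le_left _ _) (min_le_left _ _)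
      have htm : t ≤ (a/(2*((j:ℝ)+1))) ^ (1/(m:ℝ)) :=
        le_trans (min_le_left _ _) (min_le_right _ _)
      have hzcb : z ∈ closedBall (0:Ed d) R₀ := by
        rw [mem_closedBall, dist_zero_right, hznorm]; linarith [hR₀.1]
      have h0cb : (0:Ed d) ∈ closedBall (0:Ed d) R₀ := by
        rw [mem_closedBall, dist_self]; exact hR₀.1.le
      have hstep : CH * t ^ β ≤ a/2 := by
        have h1 : t ^ β ≤ ((a/(2*CH)) ^ (1/β : ℝ)) ^ β :=
          Real.rpow_le_rpow htpos.le (htη.trans (min_le_left _ _)) hβ_pos.le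
        have h2 : ((a/(2*CH)) ^ (1/β : ℝ)) ^ β = a/(2*CH) := by
          rw [one_div, Real.rpow_inv_rpow (by positivity) hβ_pos.ne']
        rw [h2] at h1
        calc CH * t ^ β ≤ CH * (a/(2*CH)) := mul_le_mul_of_nonneg_left h1 hCH0.le
        _ = a/2 := by field_simp
      have huz : a/2 ≤ |u z| := by
        have h3 := hu z hzcb 0 h0cb
        rw [sub_zero, hznorm] at h3
        have h4 : |u 0| - |u z| ≤ |u z - u 0| := by
          rw [abs_sub_comm]; exact abs_sub_abs_le_abs_sub _ _
        linarith
      refine ⟨z, ?_, ?_, ?_⟩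
      · exact fun h => (htpos.ne' (by rw [← hznorm, h, norm_zero]))
      · rw [hznorm]
        apply lt_min
        · exact lt_of_le_of_lt htj (by rw [one_div, one_div]; exact inv_strictAnti₀ (by positivity) (by linarith))
        · linarith
      · rw [hznorm]
        have h5 : t ^ m ≤ a/(2*((j:ℝ)+1)) := by
          calc t ^ m ≤ ((a/(2*((j:ℝ)+1))) ^ (1/(m:ℝ))) ^ m :=
            pow_le_pow_left₀ htpos.le htm m
          _ = a/(2*((j:ℝ)+1)) := by
            rw [one_div, Real.rpow_inv_natCast_pow (by positivity) (by omega : m ≠ 0)]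
        calc ((j:ℝ)+1) * t ^ m ≤ ((j:ℝ)+1) * (a/(2*((j:ℝ)+1))) :=
          mul_le_mul_of_nonneg_left h5 (by positivity)
        _ = a/2 := by field_simp
        _ ≤ |u z| := huz
  choose x hx0 hxlt hxa using hseq
  have hr_pos : ∀ j, 0 < ‖x j‖ := fun j => norm_pos_iff.mpr (hx0 j)
  have hr_lt : ∀ j, ‖x j‖ < 1/((j:ℝ)+1) := fun j => (hxlt j).trans_le (min_le_left _ _)
  have hrR : ∀ j, ‖x j‖ < R₀/2 := fun j => (hxlt j).trans_le (min_le_right _ _)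
  have hr1 : ∀ j, ‖x j‖ < 1 := fun j => (hrR j).trans (by linarith [hR₀.2])
  -- choose a coordinate with a large component, and pigeonhole
  choose I hI using fun j => aux_exists_big_coord hd (x j)
  obtain ⟨i, hfib⟩ : ∃ i : Fin d, (I ⁻¹' {i}).Infinite := by
    obtain ⟨i, hi⟩ := Finite.exists_infinite_fiber I
    exact ⟨i, Set.infinite_coe_iff.mp hi⟩
  -- constants
  have hd0 : (0:ℝ) < d := by exact_mod_cast hd
  set sd : ℝ := Real.sqrt d with hsd_def
  have hsd0 : 0 < sd := Real.sqrt_pos.mpr hd0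
  have hsd1 : 1 ≤ sd := by
    rw [hsd_def, show (1:ℝ) = Real.sqrt 1 from (Real.sqrt_one).symm]
    exact Real.sqrt_le_sqrt (by exact_mod_cast hd)
  set c₀ : ℝ := 1/(2*sd) with hc₀_def
  have hc₀0 : 0 < c₀ := by positivity
  have hc₀1 : c₀ ≤ 1 := by
    rw [hc₀_def, div_le_one (by positivity)]; linarith
  set E : ℝ := (m:ℝ)*(p-1) + ((m:ℝ)*(d:ℝ))/β with hE_def
  set J₀ : ℕ := ⌈2*CH⌉₊ + 1 with hJ₀_def
  have hJ₀CH : 2*CH ≤ (J₀:ℝ) := by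
    calc (2*CH : ℝ) ≤ (⌈2*CH⌉₊ : ℝ) := Nat.le_ceil _
    _ ≤ (J₀:ℝ) := by exact_mod_cast Nat.le_succ _
  have hJ₀1 : 1 ≤ J₀ := Nat.le_add_left 1 _
  set V₁ : ℝ≥0∞ := volume (ball (0:Ed d) 1) with hV₁_def
  have hV₁0 : 0 < V₁ := measure_ball_pos volume 0 one_pos
  have hV₁top : V₁ ≠ ⊤ := measure_ball_lt_top.ne
  -- the central lower bound for the moments
  have hest : ∀ j : ℕ, I j = i → J₀ ≤ j → ∀ k : ℕ,
      ENNReal.ofReal ((1/(64*(d:ℝ)))^k * c₀^d * ‖x j‖ ^ (E - 2*(k:ℝ))) * V₁ ≤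
        mik d s p u i k := by
    intro j hji hjJ k
    set r : ℝ := ‖x j‖ with hr_def
    have hr0 : 0 < r := hr_pos j
    have hrlt1 : r < 1 := hr1 j
    have hrR2 : r < R₀/2 := hrR j
    set a : ℝ := |u (x j)| with ha_def
    have haj : ((j:ℝ)+1) * r^m ≤ a := hxa j
    have hj1 : (1:ℝ) ≤ (j:ℝ) := by exact_mod_cast le_trans hJ₀1 hjJ
    have ha2CH : 2*CH*r^m ≤ a := by
      have h0 : (J₀:ℝ) ≤ (j:ℝ)+1 := by
        have : (J₀:ℝ) ≤ (j:ℝ) := by exact_mod_cast hjJ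
        linarith
      nlinarith [pow_pos hr0 m]
    have ha2 : 2*r^m ≤ a := by nlinarith [pow_pos hr0 m]
    have ha0 : 0 < a := lt_of_lt_of_le (by positivity) ha2
    set ρ : ℝ := min ((a/(2*CH)) ^ (1/β : ℝ)) (r/(2*sd)) with hρ_def
    have hρ0 : 0 < ρ := lt_min (Real.rpow_pos_of_pos (by positivity) _) (by positivity)
    have hρsd : ρ ≤ r/(2*sd) := min_le_right _ _
    have hρr2 : ρ ≤ r/2 := by
      refine le_trans hρsd ?_
      rw [div_le_div_iff₀ (by positivity) (by norm_num)]
      nlinarith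
    have hcb : x j ∈ closedBall (0:Ed d) R₀ := by
      rw [mem_closedBall, dist_zero_right]
      have := hR₀.1
      linarith
    have hxji : r/sd ≤ |x j i| := by
      have h1 := hI j; rw [hji] at h1
      rw [div_le_iff₀ hsd0]
      linarith [h1]
    have hpoint : ∀ y ∈ ball (x j) ρ, (1/(64*(d:ℝ)*r^2))^k * (a/2)^(p-1) ≤
        (y i ^ (2*k) / ‖y‖ ^ (4*k)) * (|u y| ^ (p-1) / ‖y‖ ^ ((d:ℝ) + s*p)) := by
      intro y hy
      rw [mem_ball, dist_eq_norm] at hy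
      have hyn_ub : ‖y‖ ≤ 2*r := by
        calc ‖y‖ = ‖(y - x j) + x j‖ := by rw [sub_add_cancel]
        _ ≤ ‖y - x j‖ + ‖x j‖ := norm_add_le _ _
        _ ≤ 2*r := by rw [← hr_def]; linarith
      have hyn_lb : r/2 ≤ ‖y‖ := by
        have h2 : ‖x j‖ - ‖y‖ ≤ ‖x j - y‖ := norm_sub_norm_le _ _
        rw [norm_sub_rev, ← hr_def] at h2
        linarith
      have hyn0 : 0 < ‖y‖ := lt_of_lt_of_le (by positivity) hyn_lb
      have hycb : y ∈ closedBall (0:Ed d) R₀ := by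
        rw [mem_closedBall, dist_zero_right]; linarith
      have hy1 : ‖y‖ ≤ 1 := by linarith [hR₀.2]
      have huy : a/2 ≤ |u y| := by
        have h3 := hu (x j) hcb y hycb
        have h4 : ‖x j - y‖ ^ β ≤ ρ ^ β :=
          Real.rpow_le_rpow (norm_nonneg _) (by rw [norm_sub_rev]; exact hy.le) hβ_pos.le
        have h5 : ρ ^ β ≤ a/(2*CH) := by
          have h6 : ρ ≤ (a/(2*CH)) ^ (1/β : ℝ) := min_le_left _ _
          have h7 := Real.rpow_le_rpow hρ0.le h6 hβ_pos.le
          rwa [one_div, Real.rpow_inv_rpow (by positivity) hβ_pos.ne'] at h7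
        have h8 : CH * ‖x j - y‖ ^ β ≤ a/2 := by
          calc CH * ‖x j - y‖ ^ β ≤ CH * (a/(2*CH)) :=
            mul_le_mul_of_nonneg_left (h4.trans h5) hCH0.le
          _ = a/2 := by field_simp
        have h9 : a - |u y| ≤ |u (x j) - u y| := abs_sub_abs_le_abs_sub _ _
        linarith
      have hyi : r/(2*sd) ≤ |y i| := by
        have h10 : |y i - x j i| ≤ ‖y - x j‖ := by
          have h := aux_coord_le_norm (y - x j) i
          simpa using h
        have h11 : |x j i| - |y i| ≤ |x j i - y i| := abs_sub_abs_le_abs_sub _ _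
        rw [abs_sub_comm] at h11
        have hss : r/sd - r/(2*sd) = r/(2*sd) := by field_simp; ring
        linarith [hxji]
      have t1 : (1/(64*(d:ℝ)*r^2))^k ≤ y i ^ (2*k) / ‖y‖ ^ (4*k) := by
        have e1 : y i ^ (2*k) = (y i ^ 2)^k := by rw [pow_mul]
        have e2 : ‖y‖ ^ (4*k) = (‖y‖ ^ 4)^k := by rw [pow_mul]
        have h12 : (r/(2*sd))^2 ≤ y i ^ 2 := by
          rw [← sq_abs (y i)]; exact pow_le_pow_left₀ (by positivity) hyi 2
        have h13 : ‖y‖^4 ≤ (2*r)^4 := pow_le_pow_left₀ (norm_nonneg _) hyn_ub 4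
        have key : (1:ℝ)/(64*(d:ℝ)*r^2) = (r/(2*sd))^2 / (2*r)^4 := by
          have hsd2 : sd^2 = (d:ℝ) := Real.sq_sqrt hd0.le
          rw [div_pow, mul_pow]
          rw [hsd2]
          field_simp
          ring
        rw [key, div_pow, e1, e2]
        exact div_le_div₀ (by positivity) (pow_le_pow_left₀ (by positivity) h12 k)
          (by positivity) (pow_le_pow_left₀ (by positivity) h13 k)
      have t2 : (a/2)^(p-1) ≤ |u y| ^ (p-1) / ‖y‖ ^ ((d:ℝ)+s*p) := by
        have hsp : (0:ℝ) ≤ (d:ℝ) + s*p := by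
          have h14 : (0:ℝ) ≤ s*p := mul_nonneg hs.1.le (by linarith)
          positivity
        have hden1 : ‖y‖ ^ ((d:ℝ)+s*p) ≤ 1 := Real.rpow_le_one (norm_nonneg _) hy1 hsp
        have hdenpos : 0 < ‖y‖ ^ ((d:ℝ)+s*p) := Real.rpow_pos_of_pos hyn0 _
        rw [le_div_iff₀ hdenpos]
        calc (a/2)^(p-1) * ‖y‖ ^ ((d:ℝ)+s*p) ≤ (a/2)^(p-1) * 1 :=
          mul_le_mul_of_nonneg_left hden1 (Real.rpow_nonneg (by positivity) _)
        _ = (a/2)^(p-1) := mul_one _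
        _ ≤ |u y|^(p-1) := Real.rpow_le_rpow (by positivity) huy (by linarith)
      have hnn : 0 ≤ y i ^ (2*k) / ‖y‖ ^ (4*k) :=
        div_nonneg (by rw [pow_mul]; positivity) (by positivity)
      exact mul_le_mul t1 t2 (Real.rpow_nonneg (by positivity) _) hnn
    have hball := aux_mik_lower measurableSet_ball hpoint
    have hvol : volume (ball (x j) ρ) = ENNReal.ofReal (ρ^d) * V₁ := by
      rw [hV₁_def, Measure.addHaar_ball_of_pos volume (x j) hρ0, finrank_euclideanSpace_fin]
    rw [hvol, ← mul_assoc] at hball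
    refine le_trans ?_ hball
    apply mul_le_mul_left
    rw [← ENNReal.ofReal_mul (by positivity)]
    apply ENNReal.ofReal_le_ofReal
    -- the key real inequality
    have e1 : r ^ (E - 2*(k:ℝ)) =
        r ^ ((m:ℝ)/β*(d:ℝ)) * r ^ ((m:ℝ)*(p-1)) * r ^ (-(2*(k:ℝ))) := by
      rw [← Real.rpow_add hr0, ← Real.rpow_add hr0]
      congr 1
      rw [hE_def]; field_simp; ring
    have e2 : (1/(64*(d:ℝ)*r^2))^k = (1/(64*(d:ℝ)))^k * r ^ (-(2*(k:ℝ))) := by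
      have h20 : (1:ℝ)/(64*(d:ℝ)*r^2) = (1/(64*(d:ℝ))) * (r^2)⁻¹ := by field_simp
      have h21 : ((r^2)⁻¹ : ℝ)^k = r ^ (-(2*(k:ℝ))) := by
        rw [inv_pow, ← pow_mul, ← Real.rpow_natCast r (2*k), ← Real.rpow_neg hr0.le]
        push_cast; ring_nf
      rw [h20, mul_pow, h21]
    have claim1 : c₀ * r ^ ((m:ℝ)/β) ≤ ρ := by
      have hrm : r ^ ((m:ℝ)/β) = (r^m) ^ (1/β : ℝ) := by
        rw [← Real.rpow_natCast_mul hr0.le]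
        congr 1; field_simp
      apply le_min
      · have h22 : r^m ≤ a/(2*CH) := by
          rw [le_div_iff₀ (by positivity)]; nlinarith
        have h23 : (r^m) ^ (1/β : ℝ) ≤ (a/(2*CH)) ^ (1/β : ℝ) :=
          Real.rpow_le_rpow (by positivity) h22 (by positivity)
        rw [hrm]
        calc c₀ * (r^m) ^ (1/β : ℝ) ≤ 1 * (r^m) ^ (1/β : ℝ) :=
          mul_le_mul_of_nonneg_right hc₀1 (Real.rpow_nonneg (by positivity) _)
        _ = (r^m) ^ (1/β : ℝ) := one_mul _
        _ ≤ _ := h23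
      · have h24 : (1:ℝ) ≤ (m:ℝ)/β := by
          rw [le_div_iff₀ hβ_pos]
          have : (1:ℝ) ≤ (m:ℝ) := by exact_mod_cast hm1
          linarith
        have h25 : r ^ ((m:ℝ)/β) ≤ r := by
          have := Real.rpow_le_rpow_of_exponent_ge hr0 hrlt1.le h24
          rwa [Real.rpow_one] at this
        calc c₀ * r ^ ((m:ℝ)/β) ≤ c₀ * r := mul_le_mul_of_nonneg_left h25 hc₀0.le
        _ = r/(2*sd) := by rw [hc₀_def]; field_simp
    have e3 : c₀^d * r ^ ((m:ℝ)/β*(d:ℝ)) ≤ ρ^d := by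
      have h26 : (c₀ * r ^ ((m:ℝ)/β))^d ≤ ρ^d :=
        pow_le_pow_left₀ (by positivity) claim1 d
      have h27 : (c₀ * r ^ ((m:ℝ)/β))^d = c₀^d * r ^ ((m:ℝ)/β*(d:ℝ)) := by
        rw [mul_pow, ← Real.rpow_natCast (r ^ ((m:ℝ)/β)) d, ← Real.rpow_mul hr0.le]
      rw [← h27]; exact h26
    have e4 : r ^ ((m:ℝ)*(p-1)) ≤ (a/2)^(p-1) := by
      rw [Real.rpow_natCast_mul hr0.le]
      exact Real.rpow_le_rpow (by positivity) (by linarith) (by linarith)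
    have hpos1 : (0:ℝ) ≤ (1/(64*(d:ℝ)))^k * r ^ (-(2*(k:ℝ))) := by positivity
    calc (1/(64*(d:ℝ)))^k * c₀^d * r ^ (E - 2*(k:ℝ))
        = ((1/(64*(d:ℝ)))^k * r ^ (-(2*(k:ℝ)))) *
          ((c₀^d * r ^ ((m:ℝ)/β*(d:ℝ))) * r ^ ((m:ℝ)*(p-1))) := by rw [e1]; ring
      _ ≤ ((1/(64*(d:ℝ)))^k * r ^ (-(2*(k:ℝ)))) * (ρ^d * (a/2)^(p-1)) := by
          apply mul_le_mul_of_nonneg_left _ hpos1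
          exact mul_le_mul e3 e4 (Real.rpow_nonneg hr0.le _) (by positivity)
      _ = (1/(64*(d:ℝ)*r^2))^k * (a/2)^(p-1) * ρ^d := by rw [e2]; ring
  -- positivity of moments
  have hmik_pos : ∀ k : ℕ, mik d s p u i k ≠ 0 := by
    obtain ⟨j, hj_mem, hj_gt⟩ := hfib.exists_gt J₀
    intro k
    have h1 := hest j hj_mem hj_gt.le k
    have h2 : (0:ℝ≥0∞) < ENNReal.ofReal ((1/(64*(d:ℝ)))^k * c₀^d * ‖x j‖ ^ (E - 2*(k:ℝ))) * V₁ := by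
      apply ENNReal.mul_pos _ hV₁0.ne'
      refine (ENNReal.ofReal_pos.mpr ?_).ne'
      have := Real.rpow_pos_of_pos (hr_pos j) (E - 2*(k:ℝ))
      positivity
    exact (h2.trans_le h1).ne'
  -- moments are infinite for large k
  have hmik_top : ∀ k : ℕ, E < 2*(k:ℝ) → mik d s p u i k = ⊤ := by
    intro k hEk
    by_contra hne
    set T : ℝ := (mik d s p u i k).toReal with hT_def
    have hVd0 : 0 < V₁.toReal := ENNReal.toReal_pos hV₁0.ne' hV₁top
    have hq0 : 0 < (1/(64*(d:ℝ)))^k * c₀^d := by positivity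
    set q : ℝ := (1/(64*(d:ℝ)))^k * c₀^d with hq_def
    set M : ℝ := max ((T+1)/(q*V₁.toReal)) 1 with hM_def
    have hM1 : 1 ≤ M := le_max_right _ _
    have hM0 : 0 < M := lt_of_lt_of_le one_pos hM1
    set N : ℕ := max (⌈M ^ (1/(2*(k:ℝ)-E))⌉₊) J₀ with hN_def
    obtain ⟨j, hj_mem, hj_gt⟩ := hfib.exists_gt N
    have hjJ₀ : J₀ ≤ j := le_trans (le_max_right _ _) hj_gt.le
    have h1 := hest j hj_mem hjJ₀ k
    have hMle : M ^ (1/(2*(k:ℝ)-E)) ≤ (j:ℝ)+1 := by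
      calc M ^ (1/(2*(k:ℝ)-E)) ≤ (⌈M ^ (1/(2*(k:ℝ)-E))⌉₊ : ℝ) := Nat.le_ceil _
      _ ≤ (N:ℝ) := Nat.cast_le.mpr (le_max_left _ _)
      _ ≤ (j:ℝ) := Nat.cast_le.mpr hj_gt.le
      _ ≤ (j:ℝ)+1 := by linarith
    have hrM : M ≤ ‖x j‖ ^ (E - 2*(k:ℝ)) := by
      have hz : E - 2*(k:ℝ) ≤ 0 := by linarith
      have h2 : ‖x j‖ ≤ ((j:ℝ)+1)⁻¹ := by
        have := hr_lt j; rw [one_div] at this; exact this.le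
      have h3 : (((j:ℝ)+1)⁻¹) ^ (E - 2*(k:ℝ)) ≤ ‖x j‖ ^ (E - 2*(k:ℝ)) :=
        Real.rpow_le_rpow_of_nonpos (hr_pos j) h2 hz
      have h4 : (((j:ℝ)+1)⁻¹) ^ (E - 2*(k:ℝ)) = ((j:ℝ)+1) ^ (2*(k:ℝ)-E) := by
        rw [Real.inv_rpow (by positivity), ← Real.rpow_neg (by positivity), neg_sub]
      have h5 : M ≤ ((j:ℝ)+1) ^ (2*(k:ℝ)-E) := by
        have h6 : (M ^ (1/(2*(k:ℝ)-E))) ^ (2*(k:ℝ)-E) ≤ ((j:ℝ)+1) ^ (2*(k:ℝ)-E) :=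
          Real.rpow_le_rpow (Real.rpow_nonneg hM0.le _) hMle (by linarith)
        rwa [one_div, Real.rpow_inv_rpow hM0.le (by linarith : 2*(k:ℝ)-E ≠ 0)] at h6
      rw [← h4] at h5
      exact h5.trans h3
    have h7 : q * ‖x j‖ ^ (E - 2*(k:ℝ)) * V₁.toReal ≤ T := by
      have h8 := ENNReal.toReal_mono hne h1
      rw [ENNReal.toReal_mul, ENNReal.toReal_ofReal] at h8
      · exact h8
      · have := Real.rpow_pos_of_pos (hr_pos j) (E - 2*(k:ℝ)); positivity
    have h9 : q*M*V₁.toReal ≤ q * ‖x j‖ ^ (E - 2*(k:ℝ)) * V₁.toReal := by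
      have := mul_le_mul_of_nonneg_left hrM hq0.le
      exact mul_le_mul_of_nonneg_right this hVd0.le
    have h10 : (T+1)/(q*V₁.toReal) ≤ M := le_max_left _ _
    rw [div_le_iff₀ (by positivity)] at h10
    nlinarith
  -- conclude: the Carleman sum is finite, contradiction
  have hK := hcar i
  set K : ℕ := ⌈E⌉₊ with hK_def
  have hzero : ∀ k : ℕ, k ∉ Finset.range K →
      (mik d s p u i (k + 1) ^ ((1 : ℝ) / (2 * ((k : ℝ) + 1))))⁻¹ = 0 := by
    intro k hk
    rw [Finset.mem_range, not_lt] at hk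
    have hE2 : E < 2*((k:ℝ)+1) := by
      calc E ≤ (K:ℝ) := Nat.le_ceil _
      _ ≤ (k:ℝ) := by exact_mod_cast hk
      _ < 2*((k:ℝ)+1) := by linarith [Nat.cast_nonneg (α := ℝ) k]
    have : mik d s p u i (k+1) = ⊤ := by
      apply hmik_top
      push_cast
      linarith
    rw [this, ENNReal.top_rpow_of_pos (by positivity), ENNReal.inv_top]
  have hne_top : ∀ k ∈ Finset.range K,
      (mik d s p u i (k + 1) ^ ((1 : ℝ) / (2 * ((k : ℝ) + 1))))⁻¹ < ⊤ := by
    intro k _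
    rw [lt_top_iff_ne_top, Ne, ENNReal.inv_eq_top, ENNReal.rpow_eq_zero_iff]
    push_neg
    constructor
    · intro h; exact absurd h (hmik_pos (k+1))
    · intro _
      positivity
  rw [tsum_eq_sum hzero] at hK
  exact absurd hK (ENNReal.sum_lt_top.mpr hne_top).ne
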